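/- Let λ be a real number with λ < −1 or λ > 1/3. Then there exists a constant C > 0 (depending only on λ) such that every sequence y : ℕ → ℝ satisfying the homogeneous ZeroSNet recurrence y(n+3) = α₀(λ)·y(n+2) + α₁(λ)·y(n+1) + α₂(λ)·y(n) for all n ∈ ℕ is bounded with |y(n)| ≤ C·max{|y(0)|, |y(1)|, |y(2)|} for all n ∈ ℕ. -/

import Mathlib

/-- ZeroSNet coefficient α₀(λ) = 3(1+λ)/(4λ). -/
noncomputable def zerosAlpha0 (l : ℝ) : ℝ := 3 * (1 + l) / (4 * l)

/-- ZeroSNet coefficient α₁(λ) = −1/λ. -/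
noncomputable def zerosAlpha1 (l : ℝ) : ℝ := -1 / l

/-- ZeroSNet coefficient α₂(λ) = (1+λ)/(4λ). -/
noncomputable def zerosAlpha2 (l : ℝ) : ℝ := (1 + l) / (4 * l)

set_option maxHeartbeats 1000000 in
/-- Zero stability of the homogeneous ZeroSNet recurrence: for λ in the zero-stability
region (`λ < −1` or `λ > 1/3`), there is a constant `C > 0` such that every sequence
satisfying `y(n+3) = α₀(λ)y(n+2) + α₁(λ)y(n+1) + α₂(λ)y(n)` is bounded by
`C·max{|y 0|, |y 1|, |y 2|}`. -/
theorem zerosnet_recurrence_bounded (l : ℝ) (hl : l < -1 ∨ 1 / 3 < l) :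
    ∃ C : ℝ, 0 < C ∧ ∀ y : ℕ → ℝ,
      (∀ n : ℕ, y (n + 3) = zerosAlpha0 l * y (n + 2) + zerosAlpha1 l * y (n + 1)
        + zerosAlpha2 l * y n) →
      ∀ n : ℕ, |y n| ≤ C * max |y 0| (max |y 1| |y 2|) := by
  have hl0 : l ≠ 0 := by rcases hl with h | h <;> intro h0 <;> rw [h0] at h <;> norm_num at h
  set p : ℝ := (3 - l) / (4 * l) with hp
  set q : ℝ := -(1 + l) / (4 * l) with hq
  -- the difference sequence satisfies a second order recurrence
  have hdrec : ∀ y : ℕ → ℝ,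
      (∀ n : ℕ, y (n + 3) = zerosAlpha0 l * y (n + 2) + zerosAlpha1 l * y (n + 1)
        + zerosAlpha2 l * y n) →
      ∀ n : ℕ, y (n + 3) - y (n + 2) = p * (y (n + 2) - y (n + 1)) + q * (y (n + 1) - y n) := by
    intro y hy n
    rw [hy n]
    rw [hp, hq]
    simp only [zerosAlpha0, zerosAlpha1, zerosAlpha2]
    field_simp
    ring
  -- reduce to geometric decay of the differences
  suffices h : ∃ ρ A : ℝ, 0 < ρ ∧ ρ < 1 ∧ 0 ≤ A ∧ ∀ y : ℕ → ℝ,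
      (∀ n : ℕ, y (n + 3) = zerosAlpha0 l * y (n + 2) + zerosAlpha1 l * y (n + 1)
        + zerosAlpha2 l * y n) →
      ∀ n : ℕ, |y (n + 1) - y n| ≤ A * max |y 0| (max |y 1| |y 2|) * ρ ^ n by
    obtain ⟨ρ, A, hρ0, hρ1, hA, hd⟩ := h
    have hdivnn : (0:ℝ) ≤ A / (1 - ρ) := div_nonneg hA (by linarith)
    refine ⟨1 + A / (1 - ρ), by linarith, ?_⟩
    intro y hy n
    set M := max |y 0| (max |y 1| |y 2|) with hMdef
    have hM0 : (0:ℝ) ≤ M := le_trans (abs_nonneg _) (le_max_left _ _)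
    have hy0 : |y 0| ≤ M := le_max_left _ _
    have hsum : y n = y 0 + ∑ k ∈ Finset.range n, (y (k + 1) - y k) := by
      induction n with
      | zero => simp
      | succ m ih => rw [Finset.sum_range_succ]; linarith
    have habs : |y n| ≤ |y 0| + ∑ k ∈ Finset.range n, |y (k + 1) - y k| := by
      rw [hsum]
      refine le_trans (abs_add_le _ _) ?_
      gcongr
      exact Finset.abs_sum_le_sum_abs _ _
    have hgeom : ∑ k ∈ Finset.range n, ρ ^ k ≤ 1 / (1 - ρ) := by
      rw [geom_sum_eq (ne_of_lt hρ1) n]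
      have h1 : (ρ ^ n - 1) / (ρ - 1) = (1 - ρ ^ n) / (1 - ρ) := by
        rw [div_eq_div_iff (by linarith) (by linarith)]; ring
      rw [h1]
      gcongr
      · nlinarith [pow_nonneg hρ0.le n]
    have hsum2 : ∑ k ∈ Finset.range n, |y (k + 1) - y k| ≤ A * M * (1 / (1 - ρ)) := by
      calc ∑ k ∈ Finset.range n, |y (k + 1) - y k|
          ≤ ∑ k ∈ Finset.range n, A * M * ρ ^ k :=
            Finset.sum_le_sum fun k _ => hd y hy k
        _ = A * M * ∑ k ∈ Finset.range n, ρ ^ k := by rw [Finset.mul_sum]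
        _ ≤ A * M * (1 / (1 - ρ)) :=
            mul_le_mul_of_nonneg_left hgeom (mul_nonneg hA hM0)
    have hexp : (1 + A / (1 - ρ)) * M = M + A * M * (1 / (1 - ρ)) := by
      field_simp
    rw [hexp]
    linarith
  rcases hl with hneg | hpos
  · -- case λ < -1 : |p| + |q| < 1, max-norm geometric decay
    have h4l : 4 * l < 0 := by linarith
    have hpneg : p < 0 := by
      rw [hp]; exact div_neg_of_pos_of_neg (by linarith) h4l
    have hqneg : q < 0 := by
      rw [hq]; exact div_neg_of_pos_of_neg (by linarith) h4l
    have hsval : -p - q = (l - 1) / (2 * l) := by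
      rw [hp, hq]; field_simp; ring
    have hs : -p - q < 1 := by
      rw [hsval, div_lt_iff_of_neg (by linarith : 2 * l < 0)]
      linarith
    set ρ : ℝ := (1 + (-p - q)) / 2 with hρdef
    have hρ0 : 0 < ρ := by rw [hρdef]; nlinarith
    have hρ1 : ρ < 1 := by rw [hρdef]; linarith
    have hρhalf : 1 / 2 ≤ ρ := by rw [hρdef]; nlinarith
    have hkey : (-p) * ρ + (-q) ≤ ρ ^ 2 := by
      rw [hρdef]
      nlinarith [mul_pos (show (0:ℝ) < 1 - (-p - q) by linarith)
        (show (0:ℝ) < 1 + (-p) - (-q) by nlinarith)]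
    refine ⟨ρ, 4, hρ0, hρ1, by norm_num, ?_⟩
    intro y hy
    set M := max |y 0| (max |y 1| |y 2|) with hMdef
    have hM0 : (0:ℝ) ≤ M := le_trans (abs_nonneg _) (le_max_left _ _)
    have hy0 : |y 0| ≤ M := le_max_left _ _
    have hy1 : |y 1| ≤ M := le_trans (le_max_left _ _) (le_max_right _ _)
    have hy2 : |y 2| ≤ M := le_trans (le_max_right _ _) (le_max_right _ _)
    have hb0 : |y 1 - y 0| ≤ 2 * M := le_trans (abs_sub _ _) (by linarith)
    have hb1 : |y 2 - y 1| ≤ 2 * M := le_trans (abs_sub _ _) (by linarith)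
    have key : ∀ n : ℕ, |y (n + 1) - y n| ≤ 4 * M * ρ ^ n ∧
        |y (n + 1 + 1) - y (n + 1)| ≤ 4 * M * ρ ^ (n + 1) := by
      intro n
      induction n with
      | zero =>
        constructor
        · simpa using le_trans hb0 (by linarith)
        · have : (4:ℝ) * M * ρ ^ (0 + 1) = 4 * M * ρ := by ring
          rw [this]
          refine le_trans hb1 ?_
          nlinarith
      | succ m ih =>
        refine ⟨ih.2, ?_⟩
        have hr := hdrec y hy m
        have habs2 : |y (m + 3) - y (m + 2)|
            ≤ (-p) * |y (m + 2) - y (m + 1)| + (-q) * |y (m + 1) - y m| := by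
          rw [hr]
          refine le_trans (abs_add_le _ _) ?_
          rw [abs_mul, abs_mul, abs_of_neg hpneg, abs_of_neg hqneg]
        have h1 := ih.1
        have h2 := ih.2
        have hstep : (-p) * |y (m + 2) - y (m + 1)| + (-q) * |y (m + 1) - y m|
            ≤ 4 * M * ρ ^ (m + 2) := by
          have e1 : (-p) * |y (m + 2) - y (m + 1)| ≤ (-p) * (4 * M * ρ ^ (m + 1)) :=
            mul_le_mul_of_nonneg_left h2 (by linarith)
          have e2 : (-q) * |y (m + 1) - y m| ≤ (-q) * (4 * M * ρ ^ m) :=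
            mul_le_mul_of_nonneg_left h1 (by linarith)
          have e3 : (-p) * (4 * M * ρ ^ (m + 1)) + (-q) * (4 * M * ρ ^ m)
              = 4 * M * ρ ^ m * ((-p) * ρ + (-q)) := by ring
          have e4 : 4 * M * ρ ^ m * ((-p) * ρ + (-q)) ≤ 4 * M * ρ ^ m * ρ ^ 2 :=
            mul_le_mul_of_nonneg_left hkey (by positivity)
          have e5 : 4 * M * ρ ^ m * ρ ^ 2 = 4 * M * ρ ^ (m + 2) := by ring
          linarith
        have : y (m + 1 + 1 + 1) - y (m + 1 + 1) = y (m + 3) - y (m + 2) := by norm_num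
        rw [this]
        calc |y (m + 3) - y (m + 2)|
            ≤ (-p) * |y (m + 2) - y (m + 1)| + (-q) * |y (m + 1) - y m| := habs2
          _ ≤ 4 * M * ρ ^ (m + 2) := hstep
          _ = 4 * M * ρ ^ (m + 1 + 1) := by norm_num
    intro n
    exact (key n).1
  · -- case λ > 1/3 : complex roots of modulus √(-q) < 1, use invariant quadratic form
    have h4l : 0 < 4 * l := by linarith
    have hqneg : q < 0 := by
      rw [hq]; exact div_neg_of_neg_of_pos (by linarith) h4l
    have hnq : -q = (1 + l) / (4 * l) := by rw [hq]; ring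
    have hq1 : -q < 1 := by rw [hnq, div_lt_one h4l]; linarith
    have hlpos : 0 < l := by linarith
    have hdisc : p ^ 2 + 4 * q < 0 := by
      have hval : p ^ 2 + 4 * q = -((3 * l - 1) * (5 * l + 9)) / (16 * l ^ 2) := by
        rw [hp, hq]; field_simp; ring
      rw [hval]
      apply div_neg_of_neg_of_pos
      · nlinarith
      · nlinarith [mul_pos hlpos hlpos]
    have hc : 0 < -q - p ^ 2 / 4 := by linarith
    set ρ : ℝ := Real.sqrt (-q) with hρdef
    have hρsq : ρ ^ 2 = -q := Real.sq_sqrt (by linarith)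
    have hρ0 : 0 < ρ := Real.sqrt_pos.mpr (by linarith)
    have hρ1 : ρ < 1 := by nlinarith [Real.sqrt_nonneg (-q)]
    set A : ℝ := Real.sqrt (4 * (1 + |p| + |q|) / (-q - p ^ 2 / 4)) with hAdef
    have hA0 : 0 ≤ A := Real.sqrt_nonneg _
    have hA2 : A ^ 2 = 4 * (1 + |p| + |q|) / (-q - p ^ 2 / 4) := by
      rw [hAdef]
      exact Real.sq_sqrt (div_nonneg (by positivity) hc.le)
    refine ⟨ρ, A, hρ0, hρ1, hA0, ?_⟩
    intro y hy
    set M := max |y 0| (max |y 1| |y 2|) with hMdef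
    have hM0 : (0:ℝ) ≤ M := le_trans (abs_nonneg _) (le_max_left _ _)
    have hy0 : |y 0| ≤ M := le_max_left _ _
    have hy1 : |y 1| ≤ M := le_trans (le_max_left _ _) (le_max_right _ _)
    have hy2 : |y 2| ≤ M := le_trans (le_max_right _ _) (le_max_right _ _)
    have hb0 : |y 1 - y 0| ≤ 2 * M := le_trans (abs_sub _ _) (by linarith)
    have hb1 : |y 2 - y 1| ≤ 2 * M := le_trans (abs_sub _ _) (by linarith)
    -- the invariant quadratic form
    have hF : ∀ n : ℕ,
        (y (n + 3) - y (n + 2)) ^ 2 - p * (y (n + 3) - y (n + 2)) * (y (n + 2) - y (n + 1))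
          - q * (y (n + 2) - y (n + 1)) ^ 2
        = (-q) * ((y (n + 2) - y (n + 1)) ^ 2
            - p * (y (n + 2) - y (n + 1)) * (y (n + 1) - y n)
            - q * (y (n + 1) - y n) ^ 2) := by
      intro n
      rw [hdrec y hy n]
      ring
    have hFn : ∀ n : ℕ,
        (y (n + 2) - y (n + 1)) ^ 2 - p * (y (n + 2) - y (n + 1)) * (y (n + 1) - y n)
          - q * (y (n + 1) - y n) ^ 2
        = (-q) ^ n * ((y 2 - y 1) ^ 2 - p * (y 2 - y 1) * (y 1 - y 0)
            - q * (y 1 - y 0) ^ 2) := by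
      intro n
      induction n with
      | zero => norm_num
      | succ m ih =>
        have e : m + 1 + 2 = m + 3 := by omega
        have e2 : m + 1 + 1 = m + 2 := by omega
        rw [e, e2, hF m, ih, pow_succ]
        ring
    -- bound on the initial value of the form
    have e1 : (y 1 - y 0) ^ 2 ≤ 4 * M ^ 2 := by
      nlinarith [abs_nonneg (y 1 - y 0), sq_abs (y 1 - y 0)]
    have e2 : (y 2 - y 1) ^ 2 ≤ 4 * M ^ 2 := by
      nlinarith [abs_nonneg (y 2 - y 1), sq_abs (y 2 - y 1)]
    have e3 : -(p * (y 2 - y 1) * (y 1 - y 0)) ≤ |p| * (4 * M ^ 2) := by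
      calc -(p * (y 2 - y 1) * (y 1 - y 0)) ≤ |p * (y 2 - y 1) * (y 1 - y 0)| := neg_le_abs _
        _ = |p| * |y 2 - y 1| * |y 1 - y 0| := by rw [abs_mul, abs_mul]
        _ ≤ |p| * (2 * M) * (2 * M) := by
            gcongr
        _ = |p| * (4 * M ^ 2) := by ring
    have e4 : -(q * (y 1 - y 0) ^ 2) ≤ |q| * (4 * M ^ 2) := by
      calc -(q * (y 1 - y 0) ^ 2) ≤ |q * (y 1 - y 0) ^ 2| := neg_le_abs _
        _ = |q| * (y 1 - y 0) ^ 2 := by rw [abs_mul, abs_of_nonneg (sq_nonneg (y 1 - y 0))]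
        _ ≤ |q| * (4 * M ^ 2) := mul_le_mul_of_nonneg_left e1 (abs_nonneg q)
    have hF0 : (y 2 - y 1) ^ 2 - p * (y 2 - y 1) * (y 1 - y 0) - q * (y 1 - y 0) ^ 2
        ≤ 4 * (1 + |p| + |q|) * M ^ 2 := by nlinarith
    intro n
    have h1 := hFn n
    have hlow : (-q - p ^ 2 / 4) * (y (n + 1) - y n) ^ 2
        ≤ (-q) ^ n * ((y 2 - y 1) ^ 2 - p * (y 2 - y 1) * (y 1 - y 0)
            - q * (y 1 - y 0) ^ 2) := by
      rw [← h1]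
      nlinarith [sq_nonneg ((y (n + 2) - y (n + 1)) - p / 2 * (y (n + 1) - y n))]
    have hqn : (0:ℝ) ≤ (-q) ^ n := pow_nonneg (by linarith) n
    have hup : (-q) ^ n * ((y 2 - y 1) ^ 2 - p * (y 2 - y 1) * (y 1 - y 0)
          - q * (y 1 - y 0) ^ 2)
        ≤ (-q) ^ n * (4 * (1 + |p| + |q|) * M ^ 2) :=
      mul_le_mul_of_nonneg_left hF0 hqn
    have hsq : (y (n + 1) - y n) ^ 2 ≤ (A * M * ρ ^ n) ^ 2 := by
      have hpow : (ρ ^ n) ^ 2 = (-q) ^ n := by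
        rw [← pow_mul, mul_comm, pow_mul, hρsq]
      have hrhs : (A * M * ρ ^ n) ^ 2
          = (-q) ^ n * (4 * (1 + |p| + |q|) * M ^ 2) / (-q - p ^ 2 / 4) := by
        have h' : (A * M * ρ ^ n) ^ 2 = A ^ 2 * M ^ 2 * (ρ ^ n) ^ 2 := by ring
        rw [h', hA2, hpow]
        field_simp
      rw [hrhs, le_div_iff₀ hc]
      nlinarith
    have hrhs0 : 0 ≤ A * M * ρ ^ n := by positivity
    calc |y (n + 1) - y n| = Real.sqrt ((y (n + 1) - y n) ^ 2) :=
          (Real.sqrt_sq_eq_abs _).symm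
      _ ≤ Real.sqrt ((A * M * ρ ^ n) ^ 2) := Real.sqrt_le_sqrt hsq
      _ = A * M * ρ ^ n := Real.sqrt_sq hrhs0
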